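/- Let t ≥ 1 and let V be a t×t L-banded real matrix with diagonal d_1,…,d_t that is positive semidefinite. Then the diagonal sequence is nonnegative and monotonically decreasing: 0 ≤ d_i ≤ d_j whenever 1 ≤ j ≤ i ≤ t. -/

import Mathlib

open Matrix

/-- The diagonal of a positive semidefinite L-banded matrix is nonnegative and
monotonically decreasing: `0 ≤ d_i ≤ d_j` whenever `j ≤ i`. -/
theorem lband_psd_diag_antitone (n : ℕ) (d : Fin (n + 1) → ℝ)
    (V : Matrix (Fin (n + 1)) (Fin (n + 1)) ℝ)
    (hV : ∀ i j, V i j = d (max i j))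
    (hpsd : V.PosSemidef) :
    ∀ i j : Fin (n + 1), j ≤ i → 0 ≤ d i ∧ d i ≤ d j := by
  intro i j hji
  constructor
  · have h := hpsd.dotProduct_mulVec_nonneg (Pi.single i 1)
    simpa [dotProduct, mulVec, Pi.single_apply, Finset.sum_ite_eq, hV] using h
  · have h := hpsd.dotProduct_mulVec_nonneg (Pi.single i 1 - Pi.single j 1)
    have hij : V i j = d i := by rw [hV]; congr 1; exact max_eq_left hji
    have hji' : V j i = d i := by rw [hV]; congr 1; exact max_eq_right hji
    have hii : V i i = d i := by rw [hV]; simp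
    have hjj : V j j = d j := by rw [hV]; simp
    simp only [dotProduct, mulVec, Pi.sub_apply, Pi.single_apply, star_trivial,
      sub_mul, mul_sub, Finset.sum_sub_distrib, ite_mul, one_mul, zero_mul,
      mul_ite, mul_one, mul_zero, Finset.sum_ite_eq, Finset.sum_ite_eq',
      Finset.mem_univ, if_true] at h
    rw [hij, hji', hii, hjj] at h
    linarith
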